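/- Fix d > 1 and 0 < λ < ∞, and let f_λ denote the unique fixed point of the truncated cavity operator T, extended to ℝ by 1 on (-∞,-λ] and 0 on (λ,∞). Then for all x ≥ 0, f_λ(-x) · ln(1 / f_λ(-x)) ≤ exp(-x^d / e), where the left-hand side is interpreted as 0 when f_λ(-x) ∈ {0, 1}. -/

import Mathlib

open MeasureTheory Set

/-- The truncated cavity operator `T`. -/
noncomputable def T (d lam : ℝ) (f : ℝ → ℝ) : ℝ → ℝ :=
  fun x => Real.exp (-(d * ∫ y in (-x)..lam, (x + y) ^ (d - 1) * f y))

/-- `f` is the fixed point of the truncated cavity operator on `[-λ, λ]`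
(non-increasing and `[0,1]`-valued there), extended to `ℝ` by `1` on `(-∞, -λ]`
and `0` on `(λ, ∞)`. -/
def ExtFixedPoint (d lam : ℝ) (f : ℝ → ℝ) : Prop :=
  AntitoneOn f (Icc (-lam) lam) ∧
  (∀ x ∈ Icc (-lam) lam, f x ∈ Icc (0 : ℝ) 1) ∧
  (∀ x ≤ -lam, f x = 1) ∧ (∀ x > lam, f x = 0) ∧
  (∀ x ∈ Icc (-lam) lam, T d lam f x = f x)

namespace CavityAux

lemma cont_rpow (p : ℝ) (hp : 0 < p) : Continuous fun t : ℝ => t ^ p := by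
  rw [continuous_iff_continuousAt]
  intro t
  exact Real.continuousAt_rpow_const t p (Or.inr hp.le)

lemma superadd {x t p : ℝ} (hx : 0 ≤ x) (ht : 0 ≤ t) (hp : 1 ≤ p) :
    x ^ p + t ^ p ≤ (x + t) ^ p := by
  have h := NNReal.add_rpow_le_rpow_add (Real.toNNReal x) (Real.toNNReal t) hp
  have h2 := NNReal.coe_le_coe.2 h
  push_cast [NNReal.coe_rpow, Real.coe_toNNReal x hx, Real.coe_toNNReal t ht] at h2
  exact h2

/-- FTC : `∫_{α}^{β} (c+z)^{p-1} dz = ((c+β)^p - (c+α)^p)/p`. -/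
lemma integral_rpow_shift {p : ℝ} (hp : 1 < p) (c α β : ℝ) :
    ∫ z in α..β, (c + z) ^ (p - 1) = ((c + β) ^ p - (c + α) ^ p) / p := by
  have hp0 : (0 : ℝ) < p := lt_trans one_pos hp
  have hderiv : ∀ z ∈ uIcc α β,
      HasDerivAt (fun z : ℝ => (c + z) ^ p / p) ((c + z) ^ (p - 1)) z := by
    intro z _
    have h1 : HasDerivAt (fun z : ℝ => c + z) 1 z := (hasDerivAt_id z).const_add c
    have h2 := (h1.rpow_const (p := p) (Or.inr hp.le)).div_const p
    refine h2.congr_deriv ?_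
    rw [div_eq_iff hp0.ne']; ring
  rw [intervalIntegral.integral_eq_sub_of_hasDerivAt hderiv
    (((cont_rpow (p - 1) (by linarith)).comp
      (continuous_const.add continuous_id)).intervalIntegrable _ _)]
  ring

/-- FTC : `∫_{α}^{β} (z-α)^{p-1} e^{-w (z-α)^p} dz = (1 - e^{-w(β-α)^p})/(p w)`. -/
lemma integral_rpow_exp {p : ℝ} (hp : 1 < p) (w α β : ℝ) (hw : 0 < w) :
    ∫ z in α..β, (z - α) ^ (p - 1) * Real.exp (-(w * (z - α) ^ p))
      = (1 - Real.exp (-(w * (β - α) ^ p))) / (p * w) := by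
  have hp0 : (0 : ℝ) < p := lt_trans one_pos hp
  have hderiv : ∀ z ∈ uIcc α β,
      HasDerivAt (fun z : ℝ => -Real.exp (-(w * (z - α) ^ p)) / (p * w))
        ((z - α) ^ (p - 1) * Real.exp (-(w * (z - α) ^ p))) z := by
    intro z _
    have h1 : HasDerivAt (fun z : ℝ => z - α) 1 z := (hasDerivAt_id z).sub_const α
    have h2 := (((h1.rpow_const (p := p) (Or.inr hp.le)).const_mul w).neg.exp.neg).div_const
      (p * w)
    refine h2.congr_deriv ?_
    simp only [Pi.neg_apply]
    rw [div_eq_iff (mul_pos hp0 hw).ne']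
    ring
  have hcont : Continuous fun z : ℝ =>
      (z - α) ^ (p - 1) * Real.exp (-(w * (z - α) ^ p)) := by
    have hc1 : Continuous fun z : ℝ => (z - α) ^ (p - 1) :=
      (cont_rpow (p - 1) (by linarith)).comp (continuous_id.sub continuous_const)
    have hc2 : Continuous fun z : ℝ => Real.exp (-(w * (z - α) ^ p)) :=
      (continuous_const.mul ((cont_rpow p hp0).comp (continuous_id.sub continuous_const))).neg.rexp
    exact hc1.mul hc2
  rw [intervalIntegral.integral_eq_sub_of_hasDerivAt hderiv (hcont.intervalIntegrable _ _)]
  rw [sub_self, Real.zero_rpow (ne_of_gt hp0), mul_zero, neg_zero, Real.exp_zero]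
  ring

end CavityAux

open CavityAux in
/-- for all `x ≥ 0`, `f_λ(-x) ln(1/f_λ(-x)) ≤ exp(-x^d / e)`.
(In Lean, `Real.log (1/u) = 0` when `u = 0` or `u = 1`, matching the convention.) -/
theorem fixedPoint_entropy_bound_neg (d lam : ℝ) (hd : 1 < d) (hlam : 0 < lam)
    (flam : ℝ → ℝ) (hflam : ExtFixedPoint d lam flam) :
    ∀ x : ℝ, 0 ≤ x →
      flam (-x) * Real.log (1 / flam (-x)) ≤ Real.exp (-(x ^ d / Real.exp 1)) := by
  obtain ⟨hmono, hrange, hneg, hzero, hfixT⟩ := hflam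
  have hd1 : (0 : ℝ) < d - 1 := by linarith
  have hd0 : (0 : ℝ) < d := by linarith
  -- global bounds and antitonicity
  have hf01 : ∀ y : ℝ, 0 ≤ flam y ∧ flam y ≤ 1 := by
    intro y
    rcases le_or_gt y (-lam) with h | h
    · rw [hneg y h]; exact ⟨zero_le_one, le_refl 1⟩
    · rcases le_or_gt y lam with h2 | h2
      · exact ⟨(hrange y ⟨h.le, h2⟩).1, (hrange y ⟨h.le, h2⟩).2⟩
      · rw [hzero y h2]; exact ⟨le_refl 0, zero_le_one⟩
  have hf0 : ∀ y, 0 ≤ flam y := fun y => (hf01 y).1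
  have hf1 : ∀ y, flam y ≤ 1 := fun y => (hf01 y).2
  have hanti : Antitone flam := by
    intro u v huv
    rcases le_or_gt v (-lam) with hv | hv
    · rw [hneg v hv, hneg u (le_trans huv hv)]
    · rcases lt_or_ge lam u with hu | hu
      · rw [hzero u hu, hzero v (lt_of_lt_of_le hu huv)]
      · rcases le_or_gt u (-lam) with hu2 | hu2
        · rw [hneg u hu2]; exact hf1 v
        · rcases le_or_gt v lam with hv2 | hv2
          · exact hmono ⟨hu2.le, hu⟩ ⟨hv.le, hv2⟩ huv
          · rw [hzero v hv2]; exact hf0 u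
  -- fixed point equation
  have hfix : ∀ t ∈ Icc (-lam) lam,
      flam t = Real.exp (-(d * ∫ y in (-t)..lam, (t + y) ^ (d - 1) * flam y)) :=
    fun t ht => (hfixT t ht).symm
  -- integrability
  have hII : ∀ c α β : ℝ,
      IntervalIntegrable (fun y => (c + y) ^ (d - 1) * flam y) volume α β := by
    intro c α β
    exact (hanti.intervalIntegrable).continuousOn_mul
      (((cont_rpow (d - 1) hd1).comp (continuous_const.add continuous_id)).continuousOn)
  have h0mem : (0 : ℝ) ∈ Icc (-lam) lam := ⟨by linarith, hlam.le⟩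
  -- F0 and a
  have haF : flam 0 = Real.exp (-(d * ∫ y in (0 : ℝ)..lam, y ^ (d - 1) * flam y)) := by
    have h := hfix 0 h0mem
    simpa using h
  set F0 : ℝ := d * ∫ y in (0 : ℝ)..lam, y ^ (d - 1) * flam y with hF0def
  set a : ℝ := flam 0 with hadef
  have ha_pos : 0 < a := by rw [haF]; exact Real.exp_pos _
  -- Step L1a : for 0 ≤ s ≤ lam, flam s ≤ a * exp(-(a * s ^ d))
  have hL1 : ∀ s : ℝ, 0 ≤ s → s ≤ lam → flam s ≤ a * Real.exp (-(a * s ^ d)) := by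
    intro s hs0 hslam
    have hsmem : s ∈ Icc (-lam) lam := ⟨by linarith, hslam⟩
    -- lower bound the exponent
    have hsplit : (∫ y in (-s)..lam, (s + y) ^ (d - 1) * flam y)
        = (∫ y in (-s)..(0 : ℝ), (s + y) ^ (d - 1) * flam y)
          + ∫ y in (0 : ℝ)..lam, (s + y) ^ (d - 1) * flam y :=
      (intervalIntegral.integral_add_adjacent_intervals (hII s (-s) 0) (hII s 0 lam)).symm
    have hpart1 : a * (s ^ d / d) ≤ ∫ y in (-s)..(0 : ℝ), (s + y) ^ (d - 1) * flam y := by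
      have hmono1 : ∀ z ∈ Icc (-s) (0 : ℝ), (s + z) ^ (d - 1) * a ≤ (s + z) ^ (d - 1) * flam z := by
        intro z hz
        exact mul_le_mul_of_nonneg_left (hanti hz.2)
          (Real.rpow_nonneg (by linarith [hz.1]) _)
      have hint := intervalIntegral.integral_mono_on (by linarith : -s ≤ (0:ℝ))
        (((((cont_rpow (d - 1) hd1).comp
          (continuous_const.add continuous_id))).mul continuous_const).intervalIntegrable _ _)
        (hII s (-s) 0) hmono1
      calc a * (s ^ d / d)
          = ∫ z in (-s)..(0 : ℝ), (s + z) ^ (d - 1) * a := by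
            rw [intervalIntegral.integral_mul_const, integral_rpow_shift hd]
            rw [add_zero, add_neg_cancel, Real.zero_rpow (ne_of_gt hd0)]
            ring
        _ ≤ _ := hint
    have hpart2 : (∫ y in (0 : ℝ)..lam, y ^ (d - 1) * flam y)
        ≤ ∫ y in (0 : ℝ)..lam, (s + y) ^ (d - 1) * flam y := by
      apply intervalIntegral.integral_mono_on hlam.le ?_ (hII s 0 lam)
      · intro z hz
        exact mul_le_mul_of_nonneg_right
          (Real.rpow_le_rpow hz.1 (by linarith) hd1.le) (hf0 z)
      · have := hII 0 0 lam
        simpa using this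
    have hkey : a * s ^ d + F0 ≤ d * ∫ y in (-s)..lam, (s + y) ^ (d - 1) * flam y := by
      rw [hsplit, hF0def]
      have h := add_le_add hpart1 hpart2
      calc a * s ^ d + d * ∫ y in (0 : ℝ)..lam, y ^ (d - 1) * flam y
          = d * (a * (s ^ d / d) + ∫ y in (0 : ℝ)..lam, y ^ (d - 1) * flam y) := by
            field_simp
        _ ≤ _ := by
            apply mul_le_mul_of_nonneg_left _ hd0.le
            exact h
    calc flam s = Real.exp (-(d * ∫ y in (-s)..lam, (s + y) ^ (d - 1) * flam y)) :=
          hfix s hsmem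
      _ ≤ Real.exp (-(a * s ^ d + F0)) := by
          apply Real.exp_le_exp.2; linarith
      _ = a * Real.exp (-(a * s ^ d)) := by
          rw [haF, ← Real.exp_add]
          congr 1
          ring
  -- Step L1b : F0 ≤ 1, hence a ≥ exp(-1)
  have hexp_int : ∀ w β : ℝ, 0 < w →
      (∫ z in (0 : ℝ)..β, z ^ (d - 1) * Real.exp (-(w * z ^ d)))
        = (1 - Real.exp (-(w * β ^ d))) / (d * w) := by
    intro w β hw
    have h := integral_rpow_exp hd w 0 β hw
    simp only [sub_zero] at h
    exact h
  have hF0_le : F0 ≤ 1 := by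
    have hcont : Continuous fun z : ℝ => z ^ (d - 1) * (a * Real.exp (-(a * z ^ d))) := by
      have hc1 := cont_rpow (d - 1) hd1
      have hc2 : Continuous fun z : ℝ => Real.exp (-(a * z ^ d)) :=
        (continuous_const.mul (cont_rpow d hd0)).neg.rexp
      exact hc1.mul (continuous_const.mul hc2)
    have hmono2 : ∀ z ∈ Icc (0 : ℝ) lam,
        z ^ (d - 1) * flam z ≤ z ^ (d - 1) * (a * Real.exp (-(a * z ^ d))) := by
      intro z hz
      exact mul_le_mul_of_nonneg_left (hL1 z hz.1 hz.2) (Real.rpow_nonneg hz.1 _)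
    have hint := intervalIntegral.integral_mono_on hlam.le
      (by simpa using hII 0 0 lam) (hcont.intervalIntegrable _ _) hmono2
    have hval : (∫ z in (0 : ℝ)..lam, z ^ (d - 1) * (a * Real.exp (-(a * z ^ d))))
        = a * ((1 - Real.exp (-(a * lam ^ d))) / (d * a)) := by
      have : (fun z : ℝ => z ^ (d - 1) * (a * Real.exp (-(a * z ^ d))))
          = fun z : ℝ => a * (z ^ (d - 1) * Real.exp (-(a * z ^ d))) := by
        funext z; ring
      rw [this, intervalIntegral.integral_const_mul, hexp_int a lam ha_pos]
    have hE : 0 ≤ Real.exp (-(a * lam ^ d)) := (Real.exp_pos _).le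
    rw [hF0def]
    calc d * ∫ y in (0 : ℝ)..lam, y ^ (d - 1) * flam y
        ≤ d * (a * ((1 - Real.exp (-(a * lam ^ d))) / (d * a))) := by
          apply mul_le_mul_of_nonneg_left _ hd0.le
          rw [← hval]; exact hint
      _ = 1 - Real.exp (-(a * lam ^ d)) := by field_simp
      _ ≤ 1 := by linarith
  have ha_ge : Real.exp (-1) ≤ a := by
    rw [haF]
    exact Real.exp_le_exp.2 (by linarith)
  -- Main part
  intro x hx
  rcases lt_or_ge lam x with hxl | hxl
  · -- x > lam : flam (-x) = 1
    have h1 : flam (-x) = 1 := hneg (-x) (by linarith)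
    rw [h1]
    simp only [div_one, Real.log_one, mul_zero]
    exact (Real.exp_pos _).le
  · -- 0 ≤ x ≤ lam
    have hxmem : -x ∈ Icc (-lam) lam := ⟨by linarith, by linarith⟩
    set v : ℝ := d * ∫ y in x..lam, (-x + y) ^ (d - 1) * flam y with hvdef
    have hw : flam (-x) = Real.exp (-v) := by
      have h := hfix (-x) hxmem
      rw [neg_neg] at h
      exact h
    set w : ℝ := flam (-x) with hwdef
    have hw_pos : 0 < w := by rw [hw]; exact Real.exp_pos _
    -- M1 : pointwise bound on [x, lam]
    have hM1 : ∀ y : ℝ, x ≤ y → y ≤ lam →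
        flam y ≤ Real.exp (-(a * x ^ d)) * Real.exp (-(w * (y - x) ^ d)) := by
      intro y hxy hylam
      have hy0 : 0 ≤ y := le_trans hx hxy
      have hymem : y ∈ Icc (-lam) lam := ⟨by linarith, hylam⟩
      have hsplit : (∫ z in (-y)..lam, (y + z) ^ (d - 1) * flam z)
          = ((∫ z in (-y)..(-x), (y + z) ^ (d - 1) * flam z)
            + ∫ z in (-x)..(0 : ℝ), (y + z) ^ (d - 1) * flam z)
            + ∫ z in (0 : ℝ)..lam, (y + z) ^ (d - 1) * flam z := by
        rw [intervalIntegral.integral_add_adjacent_intervals (hII y (-y) (-x)) (hII y (-x) 0),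
          intervalIntegral.integral_add_adjacent_intervals (hII y (-y) 0) (hII y 0 lam)]
      have hpartA : w * ((y - x) ^ d / d) ≤ ∫ z in (-y)..(-x), (y + z) ^ (d - 1) * flam z := by
        have hmono1 : ∀ z ∈ Icc (-y) (-x),
            (y + z) ^ (d - 1) * w ≤ (y + z) ^ (d - 1) * flam z := by
          intro z hz
          exact mul_le_mul_of_nonneg_left (hanti hz.2) (Real.rpow_nonneg (by linarith [hz.1]) _)
        have hint := intervalIntegral.integral_mono_on (by linarith : -y ≤ -x)
          (((((cont_rpow (d - 1) hd1).comp
            (continuous_const.add continuous_id))).mul continuous_const).intervalIntegrable _ _)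
          (hII y (-y) (-x)) hmono1
        calc w * ((y - x) ^ d / d)
            = ∫ z in (-y)..(-x), (y + z) ^ (d - 1) * w := by
              rw [intervalIntegral.integral_mul_const, integral_rpow_shift hd]
              rw [add_neg_cancel, Real.zero_rpow (ne_of_gt hd0)]
              ring_nf
          _ ≤ _ := hint
      have hpartB : a * (x ^ d / d) ≤ ∫ z in (-x)..(0 : ℝ), (y + z) ^ (d - 1) * flam z := by
        have hmono1 : ∀ z ∈ Icc (-x) (0 : ℝ),
            (y + z) ^ (d - 1) * a ≤ (y + z) ^ (d - 1) * flam z := by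
          intro z hz
          exact mul_le_mul_of_nonneg_left (hanti hz.2) (Real.rpow_nonneg (by linarith [hz.1]) _)
        have hint := intervalIntegral.integral_mono_on (by linarith : -x ≤ (0:ℝ))
          (((((cont_rpow (d - 1) hd1).comp
            (continuous_const.add continuous_id))).mul continuous_const).intervalIntegrable _ _)
          (hII y (-x) 0) hmono1
        have hsup : x ^ d + (y - x) ^ d ≤ y ^ d := by
          have h := superadd hx (by linarith : (0:ℝ) ≤ y - x) hd.le
          rwa [add_sub_cancel] at h
        calc a * (x ^ d / d)
            ≤ a * ((y ^ d - (y - x) ^ d) / d) := by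
              apply mul_le_mul_of_nonneg_left _ ha_pos.le
              apply (div_le_div_iff_of_pos_right hd0).2
              linarith
          _ = ∫ z in (-x)..(0 : ℝ), (y + z) ^ (d - 1) * a := by
              rw [intervalIntegral.integral_mul_const, integral_rpow_shift hd]
              rw [add_zero, ← sub_eq_add_neg]
              ring
          _ ≤ _ := hint
      have hpartC : (0 : ℝ) ≤ ∫ z in (0 : ℝ)..lam, (y + z) ^ (d - 1) * flam z := by
        apply intervalIntegral.integral_nonneg hlam.le
        intro z hz
        exact mul_nonneg (Real.rpow_nonneg (by linarith [hz.1]) _) (hf0 z)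
      have hkey : a * x ^ d + w * (y - x) ^ d
          ≤ d * ∫ z in (-y)..lam, (y + z) ^ (d - 1) * flam z := by
        rw [hsplit]
        have h := add_le_add (add_le_add hpartA hpartB) hpartC
        calc a * x ^ d + w * (y - x) ^ d
            = d * ((w * ((y - x) ^ d / d) + a * (x ^ d / d)) + 0) := by field_simp; ring
          _ ≤ _ := mul_le_mul_of_nonneg_left (by simpa using h) hd0.le
      calc flam y = Real.exp (-(d * ∫ z in (-y)..lam, (y + z) ^ (d - 1) * flam z)) :=
            hfix y hymem
        _ ≤ Real.exp (-(a * x ^ d + w * (y - x) ^ d)) := Real.exp_le_exp.2 (by linarith)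
        _ = Real.exp (-(a * x ^ d)) * Real.exp (-(w * (y - x) ^ d)) := by
            rw [← Real.exp_add]; ring_nf
    -- M2 : bound v
    have hcontM : Continuous fun y : ℝ =>
        (y - x) ^ (d - 1) * (Real.exp (-(a * x ^ d)) * Real.exp (-(w * (y - x) ^ d))) := by
      have hc1 : Continuous fun y : ℝ => (y - x) ^ (d - 1) :=
        (cont_rpow (d - 1) hd1).comp (continuous_id.sub continuous_const)
      have hc2 : Continuous fun y : ℝ => Real.exp (-(w * (y - x) ^ d)) :=
        (continuous_const.mul ((cont_rpow d hd0).comp (continuous_id.sub continuous_const))).neg.rexp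
      exact hc1.mul (continuous_const.mul hc2)
    have hvle : v ≤ Real.exp (-(a * x ^ d)) / w := by
      have hmono1 : ∀ y ∈ Icc x lam,
          (-x + y) ^ (d - 1) * flam y
            ≤ (y - x) ^ (d - 1) * (Real.exp (-(a * x ^ d)) * Real.exp (-(w * (y - x) ^ d))) := by
        intro y hy
        rw [neg_add_eq_sub]
        exact mul_le_mul_of_nonneg_left (hM1 y hy.1 hy.2)
          (Real.rpow_nonneg (by linarith [hy.1]) _)
      have hint := intervalIntegral.integral_mono_on hxl
        (hII (-x) x lam) (hcontM.intervalIntegrable _ _) hmono1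
      have hval : (∫ y in x..lam,
          (y - x) ^ (d - 1) * (Real.exp (-(a * x ^ d)) * Real.exp (-(w * (y - x) ^ d))))
          = Real.exp (-(a * x ^ d)) * ((1 - Real.exp (-(w * (lam - x) ^ d))) / (d * w)) := by
        have heq : (fun y : ℝ =>
            (y - x) ^ (d - 1) * (Real.exp (-(a * x ^ d)) * Real.exp (-(w * (y - x) ^ d))))
            = fun y : ℝ => Real.exp (-(a * x ^ d))
              * ((y - x) ^ (d - 1) * Real.exp (-(w * (y - x) ^ d))) := by
          funext y; ring
        rw [heq, intervalIntegral.integral_const_mul, integral_rpow_exp hd w x lam hw_pos]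
      have hE : 0 ≤ Real.exp (-(w * (lam - x) ^ d)) := (Real.exp_pos _).le
      have hB : 0 < Real.exp (-(a * x ^ d)) := Real.exp_pos _
      rw [hvdef]
      calc d * ∫ y in x..lam, (-x + y) ^ (d - 1) * flam y
          ≤ d * (Real.exp (-(a * x ^ d)) * ((1 - Real.exp (-(w * (lam - x) ^ d))) / (d * w))) := by
            apply mul_le_mul_of_nonneg_left _ hd0.le
            rw [← hval]; exact hint
        _ = Real.exp (-(a * x ^ d)) * (1 - Real.exp (-(w * (lam - x) ^ d))) / w := by
            field_simp
        _ ≤ Real.exp (-(a * x ^ d)) / w := by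
            apply (div_le_div_iff_of_pos_right hw_pos).2
            nlinarith
    -- conclude
    have hlog : Real.log (1 / w) = v := by
      rw [hw, one_div, ← Real.exp_neg, Real.log_exp, neg_neg]
    have hgoal1 : w * v ≤ Real.exp (-(a * x ^ d)) := by
      have := mul_le_mul_of_nonneg_left hvle hw_pos.le
      calc w * v ≤ w * (Real.exp (-(a * x ^ d)) / w) := this
        _ = Real.exp (-(a * x ^ d)) := by field_simp
    have hfinal : Real.exp (-(a * x ^ d)) ≤ Real.exp (-(x ^ d / Real.exp 1)) := by
      apply Real.exp_le_exp.2
      have hxd : 0 ≤ x ^ d := Real.rpow_nonneg hx d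
      have : x ^ d / Real.exp 1 ≤ a * x ^ d := by
        rw [div_eq_mul_inv, ← Real.exp_neg]
        calc x ^ d * Real.exp (-1) ≤ x ^ d * a :=
              mul_le_mul_of_nonneg_left ha_ge hxd
          _ = a * x ^ d := mul_comm _ _
      linarith
    calc flam (-x) * Real.log (1 / flam (-x)) = w * Real.log (1 / w) := by rw [← hwdef]
      _ = w * v := by rw [hlog]
      _ ≤ Real.exp (-(a * x ^ d)) := hgoal1
      _ ≤ Real.exp (-(x ^ d / Real.exp 1)) := hfinal
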